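/- Let K be a field and let C₁ and C₂ be finitely generated K-algebras such that, for each i ∈ {1,2} and every field extension K′ of K, the tensor product K′ ⊗_K Cᵢ is a unique factorization domain whose units are exactly the images of the nonzero elements of K′. Then C₁ ⊗_K C₂ is a unique factorization domain. -/

import Mathlib

open TensorProduct

universe u

set_option maxHeartbeats 2000000
set_option synthInstance.maxHeartbeats 400000

section AuxMultiset

variable {A B : Type*} [CommMonoidWithZero A] [IsCancelMulZero A]

/-- An irreducible element dividing a product of primes is prime. -/
theorem aux_irreducible_dvd_prime_prod {a : A} (ha : Irreducible a) (t : Multiset A)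
    (ht : ∀ q ∈ t, Prime q) (hd : a ∣ t.prod) : Prime a := by
  induction t using Multiset.induction_on with
  | empty =>
    rw [Multiset.prod_zero] at hd
    exact absurd (isUnit_of_dvd_one hd) ha.not_isUnit
  | cons p s ih =>
    have hp : Prime p := ht p (Multiset.mem_cons_self p s)
    rw [Multiset.prod_cons] at hd
    obtain ⟨c, hc⟩ := hd
    rcases hp.2.2 a c ⟨s.prod, hc.symm⟩ with h | h
    · obtain ⟨d, rfl⟩ := h
      rcases ha.isUnit_or_isUnit rfl with h' | h'
      · exact absurd h' hp.not_unit
      · obtain ⟨u, rfl⟩ := h'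
        exact Associated.prime ⟨u, rfl⟩ hp
    · obtain ⟨d, rfl⟩ := h
      have hcancel : s.prod = a * d := by
        have : p * s.prod = p * (a * d) := by
          rw [hc, mul_comm a (p * d), mul_assoc, mul_comm d a]
        exact mul_left_cancel₀ hp.ne_zero this
      exact ih (fun q hq => ht q (Multiset.mem_cons_of_mem hq)) ⟨d, hcancel⟩

/-- Stripping primes not dividing `a` from an equation `t.prod * y = a * c` shows `a ∣ y`. -/
theorem aux_dvd_of_dvd_mul_prime_prod {a : A}
    (t : Multiset A) (ht : ∀ q ∈ t, Prime q ∧ ¬q ∣ a) :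
    ∀ y c : A, t.prod * y = a * c → a ∣ y := by
  induction t using Multiset.induction_on with
  | empty =>
    intro y c h
    rw [Multiset.prod_zero, one_mul] at h
    exact ⟨c, h⟩
  | cons p s ih =>
    intro y c h
    obtain ⟨hp, hpa⟩ := ht p (Multiset.mem_cons_self p s)
    rw [Multiset.prod_cons, mul_assoc] at h
    have hpc : p ∣ c := by
      rcases hp.2.2 a c ⟨s.prod * y, h.symm⟩ with h' | h'
      · exact absurd h' hpa
      · exact h'
    obtain ⟨c', rfl⟩ := hpc
    have h2 : s.prod * y = a * c' := by
      apply mul_left_cancel₀ hp.ne_zero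
      rw [h]; simp [mul_comm, mul_left_comm, mul_assoc]
    exact ih (fun q hq => ht q (Multiset.mem_cons_of_mem hq)) y c' h2

/-- Stripping primes whose `ψ`-images are units from an equation `t.prod * c = a₁ * a₂`. -/
theorem aux_strip_units [CommMonoidWithZero B] (ψ : A →* B) (t : Multiset A)
    (ht : ∀ q ∈ t, Prime q ∧ IsUnit (ψ q)) :
    ∀ c a₁ a₂ : A, t.prod * c = a₁ * a₂ →
      ∃ e₁ b₁ e₂ b₂ : A, IsUnit (ψ e₁) ∧ IsUnit (ψ e₂) ∧ a₁ = e₁ * b₁ ∧ a₂ = e₂ * b₂ ∧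
        b₁ * b₂ = c := by
  induction t using Multiset.induction_on with
  | empty =>
    intro c a₁ a₂ h
    rw [Multiset.prod_zero, one_mul] at h
    exact ⟨1, a₁, 1, a₂, by simp, by simp, by simp, by simp, h.symm⟩
  | cons p s ih =>
    intro c a₁ a₂ h
    obtain ⟨hp, hpu⟩ := ht p (Multiset.mem_cons_self p s)
    rw [Multiset.prod_cons, mul_assoc] at h
    rcases hp.2.2 a₁ a₂ ⟨s.prod * c, h.symm⟩ with h' | h'
    · obtain ⟨b, rfl⟩ := h'
      have h2 : s.prod * c = b * a₂ := by
        apply mul_left_cancel₀ hp.ne_zero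
        rw [h]; simp [mul_comm, mul_left_comm, mul_assoc]
      obtain ⟨e₁, b₁, e₂, b₂, he₁, he₂, hb, hb2, hc⟩ := ih
        (fun q hq => ht q (Multiset.mem_cons_of_mem hq)) c b a₂ h2
      exact ⟨p * e₁, b₁, e₂, b₂, by rw [map_mul]; exact hpu.mul he₁, he₂,
        by rw [hb, mul_assoc], hb2, hc⟩
    · obtain ⟨b, rfl⟩ := h'
      have h2 : s.prod * c = a₁ * b := by
        apply mul_left_cancel₀ hp.ne_zero
        rw [h]; simp [mul_comm, mul_left_comm, mul_assoc]
      obtain ⟨e₁, b₁, e₂, b₂, he₁, he₂, hb, hb2, hc⟩ := ih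
        (fun q hq => ht q (Multiset.mem_cons_of_mem hq)) c a₁ b h2
      exact ⟨e₁, b₁, p * e₂, b₂, he₁, by rw [map_mul]; exact hpu.mul he₂, hb,
        by rw [hb2, mul_assoc], hc⟩

end AuxMultiset

/-- If `p` is prime in `C₂` and `K' ⊗ C₁` is a domain for every field extension `K'`,
then `1 ⊗ p` is prime in `C₁ ⊗ C₂` (provided it is nonzero). -/
theorem aux_prime_one_tmul (K C₁ C₂ : Type u) [Field K] [CommRing C₁] [CommRing C₂]
    [Algebra K C₁] [Algebra K C₂]
    (hdom₁ : ∀ (K' : Type u) [Field K'] [Algebra K K'], IsDomain (K' ⊗[K] C₁))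
    {p : C₂} (hp : Prime p) (hne : (1 : C₁) ⊗ₜ[K] p ≠ (0 : C₁ ⊗[K] C₂)) :
    Prime ((1 : C₁) ⊗ₜ[K] p : C₁ ⊗[K] C₂) := by
  classical
  set I : Ideal C₂ := Ideal.span {p} with hI
  have hIprime : I.IsPrime := (Ideal.span_singleton_prime hp.ne_zero).2 hp
  set D := C₂ ⧸ I with hD
  have : IsDomain D := Ideal.Quotient.isDomain I
  set M := FractionRing D with hM
  set g : C₂ →ₐ[K] M := (IsScalarTower.toAlgHom K D M).comp (Ideal.Quotient.mkₐ K I) with hg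
  have hkerg : ∀ x : C₂, g x = 0 ↔ x ∈ I := by
    intro x
    constructor
    · intro hx
      have : algebraMap D M (Ideal.Quotient.mk I x) = 0 := hx
      have h2 : Ideal.Quotient.mk I x = 0 := by
        apply IsFractionRing.injective D M
        simpa using this
      rwa [Ideal.Quotient.eq_zero_iff_mem] at h2
    · intro hx
      have h2 : Ideal.Quotient.mk I x = 0 := Ideal.Quotient.eq_zero_iff_mem.2 hx
      show algebraMap D M (Ideal.Quotient.mk I x) = 0
      rw [h2, map_zero]
  set χ : C₁ ⊗[K] C₂ →ₐ[K] C₁ ⊗[K] M :=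
    Algebra.TensorProduct.map (AlgHom.id K C₁) g with hχ
  haveI hdomM : IsDomain (C₁ ⊗[K] M) := by
    have := hdom₁ M
    exact Function.Injective.isDomain
      ((Algebra.TensorProduct.comm K C₁ M : C₁ ⊗[K] M ≃ₐ[K] M ⊗[K] C₁) :
        C₁ ⊗[K] M →+* M ⊗[K] C₁)
      (Algebra.TensorProduct.comm K C₁ M).injective
  haveI : NoZeroDivisors (C₁ ⊗[K] M) := by exact IsDomain.to_noZeroDivisors (C₁ ⊗[K] M)
  have hχlin : ∀ z : C₁ ⊗[K] C₂, LinearMap.lTensor C₁ g.toLinearMap z = χ z := by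
    intro z
    induction z with
    | zero => simp
    | tmul a b => simp [hχ]
    | add a b ha hb => simp_all
  have hχp : χ ((1 : C₁) ⊗ₜ[K] p) = 0 := by
    have : g p = 0 := (hkerg p).2 (Ideal.mem_span_singleton_self p)
    simp [hχ, this]
  have hker : ∀ x : C₁ ⊗[K] C₂, χ x = 0 ↔ ((1 : C₁) ⊗ₜ[K] p) ∣ x := by
    intro x
    constructor
    · intro hx
      set f : (Submodule.restrictScalars K I) →ₗ[K] C₂ :=
        (Submodule.restrictScalars K I).subtype with hf
      have hexact : Function.Exact f g.toLinearMap := by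
        intro y
        rw [Set.mem_range]
        constructor
        · intro hy
          exact ⟨⟨y, (hkerg y).1 hy⟩, rfl⟩
        · rintro ⟨⟨z, hz⟩, rfl⟩
          exact (hkerg z).2 hz
      have hexact2 := Module.Flat.lTensor_exact C₁ hexact
      have hx2 : LinearMap.lTensor C₁ g.toLinearMap x = 0 := by rw [hχlin, hx]
      obtain ⟨y, hy⟩ := (hexact2 x).1 hx2
      subst hy
      clear hx hx2
      induction y with
      | zero => simp
      | tmul c m =>
        obtain ⟨m, hm⟩ := m
        obtain ⟨d, rfl⟩ := Ideal.mem_span_singleton.1 hm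
        refine ⟨c ⊗ₜ[K] d, ?_⟩
        rw [LinearMap.lTensor_tmul]
        show c ⊗ₜ[K] (p * d) = (1 : C₁) ⊗ₜ[K] p * c ⊗ₜ[K] d
        rw [Algebra.TensorProduct.tmul_mul_tmul, one_mul]
      | add a b ha hb =>
        rw [map_add]
        exact dvd_add ha hb
    · rintro ⟨w, rfl⟩
      rw [map_mul, hχp, zero_mul]
  refine ⟨hne, ?_, ?_⟩
  · intro hu
    have := hu.map χ
    rw [hχp] at this
    exact not_isUnit_zero this
  · intro y z hyz
    have hz : χ y * χ z = 0 := by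
      rw [← map_mul]
      exact (hker (y * z)).2 hyz
    rcases mul_eq_zero.1 hz with h | h
    · exact Or.inl ((hker y).1 h)
    · exact Or.inr ((hker z).1 h)

/-- **Corollary.** If `C₁`, `C₂` are finitely generated algebras over a field `K` such that for
every field extension `K'` of `K` the tensor products `K' ⊗[K] Cᵢ` are UFDs whose units come
exactly from the nonzero elements of `K'`, then `C₁ ⊗[K] C₂` is a UFD. -/
theorem ufd_tensor_over_field (K C₁ C₂ : Type u) [Field K] [CommRing C₁] [CommRing C₂]
    [Algebra K C₁] [Algebra K C₂]
    [Algebra.FiniteType K C₁] [Algebra.FiniteType K C₂]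
    (hdom₁ : ∀ (K' : Type u) [Field K'] [Algebra K K'], IsDomain (K' ⊗[K] C₁))
    (hufd₁ : ∀ (K' : Type u) [Field K'] [Algebra K K'] [IsDomain (K' ⊗[K] C₁)],
      UniqueFactorizationMonoid (K' ⊗[K] C₁))
    (hunits₁ : ∀ (K' : Type u) [Field K'] [Algebra K K'] (z : K' ⊗[K] C₁),
      IsUnit z ↔ ∃ c : K', c ≠ 0 ∧ algebraMap K' (K' ⊗[K] C₁) c = z)
    (hdom₂ : ∀ (K' : Type u) [Field K'] [Algebra K K'], IsDomain (K' ⊗[K] C₂))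
    (hufd₂ : ∀ (K' : Type u) [Field K'] [Algebra K K'] [IsDomain (K' ⊗[K] C₂)],
      UniqueFactorizationMonoid (K' ⊗[K] C₂))
    (hunits₂ : ∀ (K' : Type u) [Field K'] [Algebra K K'] (z : K' ⊗[K] C₂),
      IsUnit z ↔ ∃ c : K', c ≠ 0 ∧ algebraMap K' (K' ⊗[K] C₂) c = z) :
    ∃ h : IsDomain (C₁ ⊗[K] C₂),
      UniqueFactorizationMonoid (C₁ ⊗[K] C₂) := by
  classical
  -- `C₂` is a UFD
  haveI hdK2 : IsDomain (K ⊗[K] C₂) := hdom₂ K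
  haveI hdomC₂ : IsDomain C₂ :=
    Function.Injective.isDomain
      ((Algebra.TensorProduct.lid K C₂).symm : C₂ ≃ₐ[K] K ⊗[K] C₂)
      (Algebra.TensorProduct.lid K C₂).symm.injective
  haveI hufdC₂ : UniqueFactorizationMonoid C₂ :=
    (Algebra.TensorProduct.lid K C₂).toMulEquiv.uniqueFactorizationMonoid (hufd₂ K)
  -- the fraction field of `C₂`
  set L := FractionRing C₂ with hL
  set ψ : C₁ ⊗[K] C₂ →ₐ[K] C₁ ⊗[K] L :=
    Algebra.TensorProduct.map (AlgHom.id K C₁) (IsScalarTower.toAlgHom K C₂ L) with hψ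
  -- `C₁ ⊗ L` is a UFD
  haveI hdBL : IsDomain (L ⊗[K] C₁) := hdom₁ L
  haveI hdomB : IsDomain (C₁ ⊗[K] L) :=
    Function.Injective.isDomain
      ((Algebra.TensorProduct.comm K C₁ L : C₁ ⊗[K] L ≃ₐ[K] L ⊗[K] C₁) :
        C₁ ⊗[K] L →+* L ⊗[K] C₁)
      (Algebra.TensorProduct.comm K C₁ L).injective
  haveI hufdB : UniqueFactorizationMonoid (C₁ ⊗[K] L) :=
    (Algebra.TensorProduct.comm K L C₁).toMulEquiv.uniqueFactorizationMonoid (hufd₁ L)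
  -- `ψ` is injective
  have hinj : Function.Injective ψ := by
    have h0 : Function.Injective (algebraMap C₂ L) := IsFractionRing.injective _ _
    have hlt := Module.Flat.lTensor_preserves_injective_linearMap (M := C₁) (R := K)
      (IsScalarTower.toAlgHom K C₂ L).toLinearMap h0
    intro x y hxy
    apply hlt
    have key : ∀ z : C₁ ⊗[K] C₂,
        LinearMap.lTensor C₁ (IsScalarTower.toAlgHom K C₂ L).toLinearMap z = ψ z := by
      intro z
      induction z with
      | zero => simp
      | tmul a b => simp [hψ]
      | add a b ha hb => simp_all
    rw [key, key, hxy]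
  -- `C₁ ⊗ C₂` is a domain
  haveI hdomA : IsDomain (C₁ ⊗[K] C₂) :=
    Function.Injective.isDomain (ψ : C₁ ⊗[K] C₂ →+* C₁ ⊗[K] L) hinj
  -- `C₁ ⊗ C₂` is Noetherian, hence a `WfDvdMonoid`
  haveI hftA : Algebra.FiniteType K (C₁ ⊗[K] C₂) :=
    Algebra.FiniteType.trans (inferInstance : Algebra.FiniteType K C₁)
      (inferInstance : Algebra.FiniteType C₁ (C₁ ⊗[K] C₂))
  haveI hnoethA : IsNoetherianRing (C₁ ⊗[K] C₂) := hftA.isNoetherianRing K _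
  haveI hwf : WfDvdMonoid (C₁ ⊗[K] C₂) := IsNoetherianRing.wfDvdMonoid
  -- images of nonzero elements of `C₂` in `C₁ ⊗ L` are units
  have hunit : ∀ s : C₂, s ≠ 0 → IsUnit (ψ ((1 : C₁) ⊗ₜ[K] s)) := by
    intro s hs
    have h1 : ψ ((1 : C₁) ⊗ₜ[K] s) = (1 : C₁) ⊗ₜ[K] (algebraMap C₂ L s) := by simp [hψ]
    have h2 : IsUnit (algebraMap C₂ L s) := by
      apply isUnit_iff_ne_zero.2
      intro h
      exact hs (IsFractionRing.injective C₂ L (by simpa using h))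
    rw [h1]
    exact h2.map (Algebra.TensorProduct.includeRight : L →ₐ[K] C₁ ⊗[K] L)
  -- `1 ⊗ p` is prime in `C₁ ⊗ C₂` whenever `p` is prime in `C₂`
  have hprime : ∀ p : C₂, Prime p → Prime ((1 : C₁) ⊗ₜ[K] p : C₁ ⊗[K] C₂) := by
    intro p hp
    apply aux_prime_one_tmul K C₁ C₂ hdom₁ hp
    intro h0
    have := hunit p hp.ne_zero
    rw [h0, map_zero] at this
    exact not_isUnit_zero this
  -- clearing denominators
  have hclear : ∀ b : C₁ ⊗[K] L, ∃ (s : C₂) (a : C₁ ⊗[K] C₂),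
      s ≠ 0 ∧ ψ ((1 : C₁) ⊗ₜ[K] s) * b = ψ a := by
    intro b
    induction b with
    | zero => exact ⟨1, 0, one_ne_zero, by simp⟩
    | tmul c l =>
      obtain ⟨⟨x, s⟩, hx⟩ := IsLocalization.surj (nonZeroDivisors C₂) l
      refine ⟨(s : C₂), c ⊗ₜ[K] x, nonZeroDivisors.coe_ne_zero s, ?_⟩
      have : ψ ((1 : C₁) ⊗ₜ[K] (s : C₂)) = (1 : C₁) ⊗ₜ[K] (algebraMap C₂ L s) := by simp [hψ]
      rw [this]
      have h2 : ψ (c ⊗ₜ[K] x) = c ⊗ₜ[K] (algebraMap C₂ L x) := by simp [hψ]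
      rw [h2, Algebra.TensorProduct.tmul_mul_tmul, one_mul, mul_comm, hx]
    | add b₁ b₂ h₁ h₂ =>
      obtain ⟨s₁, a₁, hs₁, hh₁⟩ := h₁
      obtain ⟨s₂, a₂, hs₂, hh₂⟩ := h₂
      refine ⟨s₁ * s₂, ((1 : C₁) ⊗ₜ[K] s₂) * a₁ + ((1 : C₁) ⊗ₜ[K] s₁) * a₂,
        mul_ne_zero hs₁ hs₂, ?_⟩
      have hsplit : (1 : C₁) ⊗ₜ[K] (s₁ * s₂) =
          ((1 : C₁) ⊗ₜ[K] s₁) * ((1 : C₁) ⊗ₜ[K] s₂) := by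
        rw [Algebra.TensorProduct.tmul_mul_tmul, one_mul]
      rw [map_add, map_mul, map_mul, hsplit, map_mul, ← hh₁, ← hh₂]
      ring
  -- factorization of `1 ⊗ s` into primes times a unit
  have hfact : ∀ s : C₂, s ≠ 0 → ∃ (t : Multiset (C₁ ⊗[K] C₂)) (e : C₁ ⊗[K] C₂),
      (∀ q ∈ t, Prime q ∧ IsUnit (ψ q)) ∧ IsUnit e ∧ IsUnit (ψ e) ∧
        (1 : C₁) ⊗ₜ[K] s = t.prod * e := by
    intro s hs
    obtain ⟨u, hu⟩ := (UniqueFactorizationMonoid.factors_prod hs)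
    set ρ : C₂ →ₐ[K] C₁ ⊗[K] C₂ := Algebra.TensorProduct.includeRight with hρ
    refine ⟨(UniqueFactorizationMonoid.factors s).map ρ, ρ u, ?_, ?_, ?_, ?_⟩
    · intro q hq
      obtain ⟨p, hp, rfl⟩ := Multiset.mem_map.1 hq
      have hpp : Prime p := UniqueFactorizationMonoid.prime_of_factor p hp
      have h1 : (ρ p : C₁ ⊗[K] C₂) = (1 : C₁) ⊗ₜ[K] p := rfl
      constructor
      · rw [h1]; exact hprime p hpp
      · rw [h1]; exact hunit p hpp.ne_zero
    · exact (Units.isUnit u).map ρ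
    · exact ((Units.isUnit u).map ρ).map ψ
    · have : ((UniqueFactorizationMonoid.factors s).map ρ).prod =
          ρ (UniqueFactorizationMonoid.factors s).prod := by
        rw [← map_multiset_prod]
      rw [this, ← map_mul]
      show ρ s = ρ ((UniqueFactorizationMonoid.factors s).prod * u)
      rw [hu]
  -- irreducible elements of `C₁ ⊗ C₂` are prime
  have hirr : ∀ a : C₁ ⊗[K] C₂, Irreducible a → Prime a := by
    intro a ha
    by_cases hu : IsUnit (ψ a)
    · -- the image of `a` is a unit: `a` divides `1 ⊗ s` for some `s ≠ 0`
      obtain ⟨v, hv⟩ := hu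
      obtain ⟨s, a', hs, hsa⟩ := hclear (↑v⁻¹)
      have h1 : ψ ((1 : C₁) ⊗ₜ[K] s) = ψ (a' * a) := by
        rw [map_mul, ← hv, ← hsa, mul_assoc]
        simp
      have h2 : (1 : C₁) ⊗ₜ[K] s = a' * a := hinj h1
      obtain ⟨t, e, ht, he, heψ, hts⟩ := hfact s hs
      have hd : a ∣ t.prod := by
        have : a ∣ t.prod * e := ⟨a', by rw [← hts, h2, mul_comm]⟩
        exact (he.dvd_mul_right).1 this
      exact aux_irreducible_dvd_prime_prod ha t (fun q hq => (ht q hq).1) hd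
    · -- the image of `a` is a nonunit: it is irreducible, hence prime, in `C₁ ⊗ L`
      have hmain : ∀ y : C₁ ⊗[K] C₂, ψ a ∣ ψ y → a ∣ y := by
        intro y ⟨b, hb⟩
        obtain ⟨s, c, hs, hcl⟩ := hclear b
        have h1 : ψ (((1 : C₁) ⊗ₜ[K] s) * y) = ψ (a * c) := by
          rw [map_mul, map_mul, ← hcl, hb]; ring
        have h2 : ((1 : C₁) ⊗ₜ[K] s) * y = a * c := hinj h1
        obtain ⟨t, e, ht, he, heψ, hts⟩ := hfact s hs
        have h3 : t.prod * (e * y) = a * c := by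
          rw [← mul_assoc, ← hts, h2]
        have htt : ∀ q ∈ t, Prime q ∧ ¬q ∣ a := by
          intro q hq
          refine ⟨(ht q hq).1, ?_⟩
          rintro ⟨d, rfl⟩
          rcases ha.isUnit_or_isUnit rfl with h' | h'
          · exact (ht q hq).1.not_unit h'
          · apply hu
            rw [map_mul]
            exact ((ht q hq).2.mul (h'.map ψ))
        have h4 : a ∣ e * y := aux_dvd_of_dvd_mul_prime_prod t htt (e * y) c h3
        exact (he.dvd_mul_left).1 h4
      have hirrB : Irreducible (ψ a) := by
        constructor
        · exact hu
        · intro x y hxy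
          obtain ⟨s₁, a₁, hs₁, h₁⟩ := hclear x
          obtain ⟨s₂, a₂, hs₂, h₂⟩ := hclear y
          have hsplit : ψ ((1 : C₁) ⊗ₜ[K] (s₁ * s₂)) =
              ψ ((1 : C₁) ⊗ₜ[K] s₁) * ψ ((1 : C₁) ⊗ₜ[K] s₂) := by
            rw [← map_mul, Algebra.TensorProduct.tmul_mul_tmul, one_mul]
          have h1 : ψ (((1 : C₁) ⊗ₜ[K] (s₁ * s₂)) * a) = ψ (a₁ * a₂) := by
            rw [map_mul, hsplit, hxy, map_mul]
            calc ψ ((1:C₁) ⊗ₜ[K] s₁) * ψ ((1:C₁) ⊗ₜ[K] s₂) * (x * y)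
                = (ψ ((1:C₁) ⊗ₜ[K] s₁) * x) * (ψ ((1:C₁) ⊗ₜ[K] s₂) * y) := by ring
              _ = ψ a₁ * ψ a₂ := by rw [h₁, h₂]
          have h2 : ((1 : C₁) ⊗ₜ[K] (s₁ * s₂)) * a = a₁ * a₂ := hinj h1
          obtain ⟨t, e, ht, he, heψ, hts⟩ := hfact (s₁ * s₂) (mul_ne_zero hs₁ hs₂)
          have h3 : t.prod * (e * a) = a₁ * a₂ := by
            rw [← mul_assoc, ← hts, h2]
          obtain ⟨e₁, b₁, e₂, b₂, he₁, he₂, hb₁, hb₂, hbc⟩ :=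
            aux_strip_units (ψ : C₁ ⊗[K] C₂ →* C₁ ⊗[K] L) t ht (e * a) a₁ a₂ h3
          -- `a` is irreducible, so `b₁` or `b₂` is a unit
          have hba : ∃ w : C₁ ⊗[K] C₂, IsUnit w ∧ a = w * (b₁ * b₂) := by
            obtain ⟨eu, heu⟩ := he
            refine ⟨↑eu⁻¹, Units.isUnit _, ?_⟩
            rw [hbc, ← heu]
            rw [← mul_assoc]
            simp
          obtain ⟨w, hw, hwa⟩ := hba
          have : IsUnit b₁ ∨ IsUnit b₂ := by
            rw [← mul_assoc] at hwa
            rcases ha.isUnit_or_isUnit hwa with h' | h'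
            · left
              exact isUnit_of_mul_isUnit_right h'
            · right; exact h'
          rcases this with h' | h'
          · left
            have hux : IsUnit (ψ ((1:C₁) ⊗ₜ[K] s₁) * x) := by
              rw [h₁, hb₁, map_mul]
              exact he₁.mul (h'.map ψ)
            exact isUnit_of_mul_isUnit_right hux
          · right
            have huy : IsUnit (ψ ((1:C₁) ⊗ₜ[K] s₂) * y) := by
              rw [h₂, hb₂, map_mul]
              exact he₂.mul (h'.map ψ)
            exact isUnit_of_mul_isUnit_right huy
      have hprimeB : Prime (ψ a) := UniqueFactorizationMonoid.irreducible_iff_prime.1 hirrB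
      refine ⟨fun h0 => not_irreducible_zero (h0 ▸ ha), ha.not_isUnit, ?_⟩
      intro y z hyz
      have : ψ a ∣ ψ y * ψ z := by
        rw [← map_mul]
        exact map_dvd ψ hyz
      rcases hprimeB.2.2 _ _ this with h | h
      · exact Or.inl (hmain y h)
      · exact Or.inr (hmain z h)
  refine ⟨hdomA, ?_⟩
  exact { hwf with
    irreducible_iff_prime := fun {a} => ⟨hirr a, Prime.irreducible⟩ }
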